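/- If τ ∈ ℝ^J satisfies the symmetry α_k τ_k = −α_{J−k+1}τ_{J−k+1} with symmetric α (α_k = α_{J−k+1}), and Π is a probability density symmetric about 0, then ∫ π_J(θ)² π_0(θ) Π(θ) dθ = ∫ π_J(θ) π_0(θ)² Π(θ) dθ, where π_j are the GPCM probabilities. -/

import Mathlib

open Real MeasureTheory Finset

noncomputable def gpcmPi (J : ℕ) (α τ : ℕ → ℝ) (θ : ℝ) (j : ℕ) : ℝ :=
  Real.exp (∑ s ∈ Finset.Icc 1 j, α s * (θ - τ s)) /
    ∑ k ∈ Finset.Icc 0 J, Real.exp (∑ s ∈ Finset.Icc 1 k, α s * (θ - τ s))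

lemma gpcm_reindex (J k : ℕ) (hk : k ≤ J) (f : ℕ → ℝ) :
    ∑ s ∈ Finset.Ioc (J - k) J, f s = ∑ s ∈ Finset.Icc 1 k, f (J - s + 1) := by
  apply Finset.sum_nbij' (fun s => J - s + 1) (fun s => J - s + 1)
  all_goals intro a ha <;> simp [Finset.mem_Ioc, Finset.mem_Icc] at * <;> try omega
  congr 1; omega

lemma gpcm_key (J : ℕ) (α τ : ℕ → ℝ)
    (hsymα : ∀ k, 1 ≤ k → k ≤ J → α k = α (J - k + 1))
    (hsymτ : ∀ k, 1 ≤ k → k ≤ J → α k * τ k = -(α (J - k + 1) * τ (J - k + 1)))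
    (θ : ℝ) (k : ℕ) (hk : k ≤ J) :
    (∑ s ∈ Finset.Icc 1 k, α s * (-θ - τ s)) + ∑ s ∈ Finset.Icc 1 J, α s * (θ - τ s)
      = ∑ s ∈ Finset.Icc 1 (J - k), α s * (θ - τ s) := by
  have hsplit : (∑ s ∈ Finset.Ioc 0 (J - k), α s * (θ - τ s))
      + ∑ s ∈ Finset.Ioc (J - k) J, α s * (θ - τ s)
      = ∑ s ∈ Finset.Ioc 0 J, α s * (θ - τ s) :=
    Finset.sum_Ioc_consecutive _ (Nat.zero_le _) (by omega)
  have h1 : Finset.Icc 1 J = Finset.Ioc 0 J := by exact Finset.Icc_add_one_left_eq_Ioc ..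
  have h2 : Finset.Icc 1 (J - k) = Finset.Ioc 0 (J - k) := by exact Finset.Icc_add_one_left_eq_Ioc ..
  rw [h1, h2, ← hsplit, gpcm_reindex J k hk]
  have : ∀ s ∈ Finset.Icc 1 k, α (J - s + 1) * (θ - τ (J - s + 1))
      = -(α s * (-θ - τ s)) := by
    intro s hs
    simp only [Finset.mem_Icc] at hs
    have ha := hsymα s hs.1 (hs.2.trans hk)
    have ht := hsymτ s hs.1 (hs.2.trans hk)
    linear_combination (-θ) * ha - ht
  rw [Finset.sum_congr rfl this, Finset.sum_neg_distrib]
  ring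

lemma gpcm_denom_pos (J : ℕ) (α τ : ℕ → ℝ) (θ : ℝ) :
    0 < ∑ k ∈ Finset.Icc 0 J, Real.exp (∑ s ∈ Finset.Icc 1 k, α s * (θ - τ s)) :=
  Finset.sum_pos (fun k _ => Real.exp_pos _) ⟨0, by simp⟩

lemma gpcm_denom_neg (J : ℕ) (α τ : ℕ → ℝ)
    (hsymα : ∀ k, 1 ≤ k → k ≤ J → α k = α (J - k + 1))
    (hsymτ : ∀ k, 1 ≤ k → k ≤ J → α k * τ k = -(α (J - k + 1) * τ (J - k + 1)))
    (θ : ℝ) :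
    (∑ k ∈ Finset.Icc 0 J, Real.exp (∑ s ∈ Finset.Icc 1 k, α s * (-θ - τ s)))
      = Real.exp (∑ s ∈ Finset.Icc 1 J, α s * (-θ - τ s)) *
        ∑ k ∈ Finset.Icc 0 J, Real.exp (∑ s ∈ Finset.Icc 1 k, α s * (θ - τ s)) := by
  rw [Finset.mul_sum]
  have hbij : ∑ k ∈ Finset.Icc 0 J, Real.exp (∑ s ∈ Finset.Icc 1 k, α s * (-θ - τ s))
      = ∑ k ∈ Finset.Icc 0 J, Real.exp (∑ s ∈ Finset.Icc 1 (J - k), α s * (-θ - τ s)) := by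
    apply Finset.sum_nbij' (fun k => J - k) (fun k => J - k)
    all_goals intro a ha <;> simp [Finset.mem_Icc] at * <;> try omega
    congr 2; omega
  rw [hbij]
  apply Finset.sum_congr rfl
  intro k hk
  simp only [Finset.mem_Icc] at hk
  rw [← Real.exp_add]
  congr 1
  have h1 := gpcm_key J α τ hsymα hsymτ (-θ) k hk.2
  simp only [neg_neg] at h1
  linarith

lemma gpcm_swap_J (J : ℕ) (α τ : ℕ → ℝ)
    (hsymα : ∀ k, 1 ≤ k → k ≤ J → α k = α (J - k + 1))
    (hsymτ : ∀ k, 1 ≤ k → k ≤ J → α k * τ k = -(α (J - k + 1) * τ (J - k + 1)))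
    (θ : ℝ) : gpcmPi J α τ (-θ) J = gpcmPi J α τ θ 0 := by
  unfold gpcmPi
  rw [gpcm_denom_neg J α τ hsymα hsymτ θ]
  rw [show Finset.Icc 1 0 = (∅ : Finset ℕ) by simp, Finset.sum_empty, Real.exp_zero]
  have hD := (gpcm_denom_pos J α τ θ).ne'
  have hE := Real.exp_ne_zero (∑ s ∈ Finset.Icc 1 J, α s * (-θ - τ s))
  field_simp

lemma gpcm_swap_0 (J : ℕ) (α τ : ℕ → ℝ)
    (hsymα : ∀ k, 1 ≤ k → k ≤ J → α k = α (J - k + 1))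
    (hsymτ : ∀ k, 1 ≤ k → k ≤ J → α k * τ k = -(α (J - k + 1) * τ (J - k + 1)))
    (θ : ℝ) : gpcmPi J α τ (-θ) 0 = gpcmPi J α τ θ J := by
  unfold gpcmPi
  rw [gpcm_denom_neg J α τ hsymα hsymτ θ]
  rw [show Finset.Icc 1 0 = (∅ : Finset ℕ) by simp, Finset.sum_empty, Real.exp_zero]
  have h2 := gpcm_key J α τ hsymα hsymτ (-θ) J le_rfl
  simp only [neg_neg, Nat.sub_self] at h2
  rw [show Finset.Icc 1 0 = (∅ : Finset ℕ) by simp, Finset.sum_empty] at h2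
  have hEq : Real.exp (∑ s ∈ Finset.Icc 1 J, α s * (θ - τ s))
      = (Real.exp (∑ s ∈ Finset.Icc 1 J, α s * (-θ - τ s)))⁻¹ := by
    rw [← Real.exp_neg]; congr 1; linarith
  rw [hEq]
  have hD := (gpcm_denom_pos J α τ θ).ne'
  have hE := Real.exp_ne_zero (∑ s ∈ Finset.Icc 1 J, α s * (-θ - τ s))
  field_simp

lemma integral_comp_neg_real (f : ℝ → ℝ) : ∫ x, f (-x) = ∫ x, f x := by
  have A : MeasurableEmbedding fun x : ℝ => -x :=
    (Homeomorph.neg ℝ).isClosedEmbedding.measurableEmbedding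
  have h := A.integral_map (μ := volume) f
  rw [Measure.map_neg_eq_self (volume : Measure ℝ)] at h
  exact h.symm

/-- Under the GPCM symmetry conditions and a symmetric density `Π`,
`∫ π_J² π₀ Π dθ = ∫ π_J π₀² Π dθ`. -/
theorem gpcm_symmetric_moment_integral (J : ℕ) (hJ : 1 ≤ J) (α τ : ℕ → ℝ)
    (hα : ∀ s, 0 < α s)
    (hsymα : ∀ k, 1 ≤ k → k ≤ J → α k = α (J - k + 1))
    (hsymτ : ∀ k, 1 ≤ k → k ≤ J → α k * τ k = -(α (J - k + 1) * τ (J - k + 1)))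
    (w : ℝ → ℝ) (hnn : ∀ θ, 0 ≤ w θ) (hsym : ∀ θ, w (-θ) = w θ) (hprob : ∫ θ, w θ = 1)
    (hInt1 : Integrable (fun θ => (gpcmPi J α τ θ J) ^ 2 * gpcmPi J α τ θ 0 * w θ))
    (hInt2 : Integrable (fun θ => gpcmPi J α τ θ J * (gpcmPi J α τ θ 0) ^ 2 * w θ)) :
    ∫ θ, (gpcmPi J α τ θ J) ^ 2 * gpcmPi J α τ θ 0 * w θ
      = ∫ θ, gpcmPi J α τ θ J * (gpcmPi J α τ θ 0) ^ 2 * w θ := by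
  have key : ∀ θ : ℝ, (fun θ => (gpcmPi J α τ θ J) ^ 2 * gpcmPi J α τ θ 0 * w θ) (-θ)
      = gpcmPi J α τ θ J * (gpcmPi J α τ θ 0) ^ 2 * w θ := by
    intro θ
    simp only
    rw [gpcm_swap_J J α τ hsymα hsymτ θ, gpcm_swap_0 J α τ hsymα hsymτ θ, hsym]
    ring
  rw [← integral_comp_neg_real (fun θ => (gpcmPi J α τ θ J) ^ 2 * gpcmPi J α τ θ 0 * w θ)]
  exact integral_congr_ae (Filter.Eventually.of_forall key)
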